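/- Let f_1,…,f_n ∈ ℂ[x_1,…,x_n] with deg f_i = d_i, having a finite common zero set V(f) on which the Jacobian determinant J_f = det(∂f_i/∂x_j) is everywhere nonzero. For t ∈ ℂ, t ≠ 0, let f_{t,i} := Σ_{|a| ≤ d_i} c_{ia} t^{d_i − |a|} x^a, where f_i = Σ_{|a| ≤ d_i} c_{ia} x^a. Then the common zero set V(f_t) of f_{t,1},…,f_{t,n} is finite, J_{f_t} is nonzero on it, and for every β ∈ (ℤ_{≥0})^n, Σ_{ξ ∈ V(f_t)} ξ^β / J_{f_t}(ξ) = t^{|β| − ρ} · Σ_{η ∈ V(f)} η^β / J_f(η), where ρ = Σ_{i=1}^n d_i − n and |β| is the sum of the entries of β. -/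

import Mathlib

open MvPolynomial

/-- The `t`-scaled polynomial of level `d` of `f = Σ_a c_a x^a`, namely
`f_t := Σ_a c_a t^{d − |a|} x^a`, where `|a|` is the sum of the entries of `a`. -/
noncomputable def scaledPoly {n : ℕ} (f : MvPolynomial (Fin n) ℂ) (d : ℕ) (t : ℂ) :
    MvPolynomial (Fin n) ℂ :=
  ∑ a ∈ f.support, monomial a (f.coeff a * t ^ (d - a.degree))

lemma prod_smul_pow {n : ℕ} (t : ℂ) (y : Fin n → ℂ) (m : (Fin n) →₀ ℕ) :
    (m.prod fun i e => (t • y) i ^ e) = t ^ m.degree * m.prod fun i e => y i ^ e := by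
  simp only [Pi.smul_apply, smul_eq_mul, mul_pow, Finsupp.prod, Finset.prod_mul_distrib,
    Finsupp.degree_apply, Finset.prod_pow_eq_pow_sum]

lemma my_degree_add {n : ℕ} (a b : (Fin n) →₀ ℕ) : (a + b).degree = a.degree + b.degree := by
  simp only [Finsupp.degree_eq_weight_one, map_add]

lemma eval_smul_scaled' {n : ℕ} (f : MvPolynomial (Fin n) ℂ) (d : ℕ)
    (hd : ∀ a ∈ f.support, a.degree ≤ d) (t : ℂ) (y : Fin n → ℂ) :
    eval (t • y) (scaledPoly f d t) = t ^ d * eval y f := by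
  conv_rhs => rw [f.as_sum]
  rw [scaledPoly, map_sum, map_sum, Finset.mul_sum]
  refine Finset.sum_congr rfl fun a ha => ?_
  rw [eval_monomial, eval_monomial, prod_smul_pow]
  have h := hd a ha
  rw [show d = (d - a.degree) + a.degree from by omega, pow_add]
  ring_nf
  rw [show d - a.degree + a.degree - a.degree = d - a.degree from by omega]
  ring

lemma eval_smul_pderiv_scaled' {n : ℕ} (f : MvPolynomial (Fin n) ℂ) (d : ℕ)
    (hd : ∀ a ∈ f.support, a.degree ≤ d) (t : ℂ) (j : Fin n) (y : Fin n → ℂ) :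
    eval (t • y) (pderiv j (scaledPoly f d t)) = t ^ (d - 1) * eval y (pderiv j f) := by
  conv_rhs => rw [f.as_sum]
  rw [scaledPoly, map_sum, map_sum, map_sum, map_sum, Finset.mul_sum]
  refine Finset.sum_congr rfl fun a ha => ?_
  rw [pderiv_monomial, pderiv_monomial, eval_monomial, eval_monomial, prod_smul_pow]
  rcases Nat.eq_zero_or_pos (a j) with h | h
  · simp [h]
  · have hd1 : a j ≤ a.degree := Finsupp.le_degree j a
    have h2 : a.degree ≤ d := hd a ha
    have hsub : (a - Finsupp.single j 1).degree = a.degree - 1 := by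
      have heq : (a - Finsupp.single j 1) + Finsupp.single j 1 = a := by
        ext k
        rcases eq_or_ne k j with rfl | hk
        · simp [Finsupp.single_apply]; omega
        · simp [Finsupp.single_apply, hk.symm, Ne.symm hk]
      have h3 := congrArg Finsupp.degree heq
      have h4 : (Finsupp.single j (1:ℕ)).degree = 1 := by
        simp [Finsupp.degree_apply, Finsupp.support_single_ne_zero j one_ne_zero]
      rw [my_degree_add, h4] at h3
      omega
    rw [hsub, show (d - 1) = (d - a.degree) + (a.degree - 1) from by omega, pow_add]
    ring

lemma le_tot {n : ℕ} (f : MvPolynomial (Fin n) ℂ) :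
    ∀ a ∈ f.support, a.degree ≤ f.totalDegree := fun _ ha => le_totalDegree ha

/-- Let `f_1,…,f_n ∈ ℂ[x_1,…,x_n]` have a finite common zero set `V(f)` on which the Jacobian
`J_f` is everywhere nonzero, and let `t ≠ 0`.  Then the common zero set `V(f_t)` of the scaled
system is finite, `J_{f_t}` is nonzero on it, and for every `β ∈ (ℤ_{≥0})^n`,
`Σ_{ξ ∈ V(f_t)} ξ^β / J_{f_t}(ξ) = t^{|β| − ρ} · Σ_{η ∈ V(f)} η^β / J_f(η)`,
where `ρ = Σ deg f_i − n`. -/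
theorem residue_scaled_system {n : ℕ} (f : Fin n → MvPolynomial (Fin n) ℂ)
    (hfin : {x : Fin n → ℂ | ∀ i, eval x (f i) = 0}.Finite)
    (hsimple : ∀ x ∈ {x : Fin n → ℂ | ∀ i, eval x (f i) = 0},
      eval x (Matrix.of fun i j => pderiv j (f i)).det ≠ 0)
    (t : ℂ) (ht : t ≠ 0) :
    {x : Fin n → ℂ | ∀ i, eval x (scaledPoly (f i) ((f i).totalDegree) t) = 0}.Finite ∧
    (∀ x ∈ {x : Fin n → ℂ | ∀ i, eval x (scaledPoly (f i) ((f i).totalDegree) t) = 0},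
      eval x (Matrix.of fun i j => pderiv j (scaledPoly (f i) ((f i).totalDegree) t)).det ≠ 0) ∧
    ∀ β : Fin n → ℕ,
      (∑ᶠ ξ ∈ {x : Fin n → ℂ | ∀ i, eval x (scaledPoly (f i) ((f i).totalDegree) t) = 0},
        (∏ i, ξ i ^ β i) /
          eval ξ (Matrix.of fun i j => pderiv j (scaledPoly (f i) ((f i).totalDegree) t)).det) =
      t ^ ((∑ i, (β i : ℤ)) - ((∑ i, ((f i).totalDegree : ℤ)) - (n : ℤ))) *
        ∑ᶠ η ∈ {x : Fin n → ℂ | ∀ i, eval x (f i) = 0},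
          (∏ i, η i ^ β i) / eval η (Matrix.of fun i j => pderiv j (f i)).det := by
  classical
  set S := {x : Fin n → ℂ | ∀ i, eval x (f i) = 0} with hSdef
  set St := {x : Fin n → ℂ | ∀ i, eval x (scaledPoly (f i) ((f i).totalDegree) t) = 0}
    with hStdef
  have hinj : Function.Injective (fun y : Fin n → ℂ => t • y) :=
    smul_right_injective (Fin n → ℂ) ht
  have himg : St = (fun y : Fin n → ℂ => t • y) '' S := by
    ext x
    constructor
    · intro hx
      refine ⟨t⁻¹ • x, fun i => ?_, smul_inv_smul₀ ht x⟩
      have h0 := hx i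
      rw [show x = t • (t⁻¹ • x) from (smul_inv_smul₀ ht x).symm,
        eval_smul_scaled' _ _ (le_tot _)] at h0
      exact (mul_eq_zero.mp h0).resolve_left (pow_ne_zero _ ht)
    · rintro ⟨y, hy, rfl⟩ i
      rw [eval_smul_scaled' _ _ (le_tot _), hy i, mul_zero]
  have hJ : ∀ y : Fin n → ℂ,
      eval (t • y) (Matrix.of fun i j => pderiv j (scaledPoly (f i) ((f i).totalDegree) t)).det
        = (∏ i, t ^ ((f i).totalDegree - 1)) *
          eval y (Matrix.of fun i j => pderiv j (f i)).det := by
    intro y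
    rw [RingHom.map_det, RingHom.map_det, RingHom.mapMatrix_apply, RingHom.mapMatrix_apply]
    have hM : (Matrix.of fun i j => pderiv j (scaledPoly (f i) ((f i).totalDegree) t)).map
        (eval (t • y)) = Matrix.of fun i j => t ^ ((f i).totalDegree - 1) *
          (((Matrix.of fun i j => pderiv j (f i)).map (eval y)) i j) := by
      ext i j
      simp only [Matrix.map_apply, Matrix.of_apply]
      exact eval_smul_pderiv_scaled' (f i) _ (le_tot _) t j y
    rw [hM, Matrix.det_mul_column]
  have hfin' : St.Finite := by rw [himg]; exact hfin.image _
  refine ⟨hfin', ?_, ?_⟩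
  · intro x hx
    rw [himg] at hx
    obtain ⟨y, hy, rfl⟩ := hx
    rw [hJ]
    exact mul_ne_zero (Finset.prod_ne_zero_iff.mpr fun i _ => pow_ne_zero _ ht)
      (hsimple y hy)
  · intro β
    rcases Set.eq_empty_or_nonempty S with hE | ⟨y0, hy0⟩
    · rw [himg, hE, Set.image_empty, finsum_mem_empty, finsum_mem_empty, mul_zero]
    · have hd : ∀ i, 1 ≤ (f i).totalDegree := by
        intro i
        by_contra hle
        have h0 : (f i).totalDegree = 0 := by omega
        have hrow : ∀ j, pderiv j (f i) = 0 := by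
          intro j
          rw [(f i).as_sum, map_sum]
          refine Finset.sum_eq_zero fun m hm => ?_
          have hm0 : m = 0 := by
            ext x
            exact ((totalDegree_eq_zero_iff (Fin n) (f i)).mp h0) m hm x
          rw [hm0]
          simp [pderiv_monomial]
        refine hsimple y0 hy0 ?_
        rw [Matrix.det_eq_zero_of_row_eq_zero i (fun j => hrow j), map_zero]
      set D : ℕ := ∑ i, ((f i).totalDegree - 1) with hDdef
      set B : ℕ := ∑ i, β i with hBdef
      have hCprod : (∏ i, t ^ ((f i).totalDegree - 1)) = t ^ D :=
        Finset.prod_pow_eq_pow_sum _ _ _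
      have hcast : ∀ i : Fin n, (((f i).totalDegree - 1 : ℕ) : ℤ)
          = ((f i).totalDegree : ℤ) - 1 := fun i => by have := hd i; omega
      have h1 : ((D : ℕ) : ℤ) = (∑ i, ((f i).totalDegree : ℤ)) - (n : ℤ) := by
        rw [hDdef, Nat.cast_sum, Finset.sum_congr rfl fun i _ => hcast i,
          Finset.sum_sub_distrib, Finset.sum_const, Finset.card_univ, Fintype.card_fin,
          nsmul_eq_mul, mul_one]
      have h2 : ((B : ℕ) : ℤ) = ∑ i, (β i : ℤ) := by rw [hBdef]; push_cast; rfl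
      have hexp : ((∑ i, (β i : ℤ)) - ((∑ i, ((f i).totalDegree : ℤ)) - (n : ℤ)))
          = (B : ℤ) - (D : ℤ) := by rw [← h1, ← h2]
      rw [himg, finsum_mem_image (hinj.injOn), hexp,
        ← Set.Finite.coe_toFinset hfin, finsum_mem_coe_finset, finsum_mem_coe_finset,
        Finset.mul_sum]
      refine Finset.sum_congr rfl fun η _ => ?_
      show (∏ i, (t • η) i ^ β i) /
          eval (t • η)
            (Matrix.of fun i j => pderiv j (scaledPoly (f i) ((f i).totalDegree) t)).det
        = t ^ ((B : ℤ) - (D : ℤ)) *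
          ((∏ i, η i ^ β i) / eval η (Matrix.of fun i j => pderiv j (f i)).det)
      rw [hJ, hCprod]
      have hnum : (∏ i, (t • η) i ^ β i) = t ^ B * ∏ i, η i ^ β i := by
        simp [Pi.smul_apply, smul_eq_mul, mul_pow, Finset.prod_mul_distrib,
          Finset.prod_pow_eq_pow_sum, hBdef]
      rw [hnum, zpow_sub₀ ht, zpow_natCast, zpow_natCast, div_mul_div_comm]
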